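/- Let w : ℝ^{d×N} → ℝ be Lipschitz continuous and ℤ^{d×N}-periodic, and let Γ¹ = I, Γ²,...,Γᴺ be diagonal d×d matrices. Define v : ℝᵈ → ℝ by v(y) = w(Γ¹y, Γ²y, ..., Γᴺy). If w is a viscosity subsolution of H(y¹,...,yᴺ, p + Σₙ Γⁿ ∇_{yⁿ} w) ≤ c on ℝ^{d×N} for a continuous H and constant c, and φ ∈ C²(ℝᵈ) is such that v − φ has a strict local maximum at ȳ ∈ ℝᵈ, then H(Γ¹ȳ, Γ²ȳ, ..., Γᴺȳ, p + ∇φ(ȳ)) ≤ c. -/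

import Mathlib

open Metric Filter Topology Finset ContinuousLinearMap
open Metric Filter Topology Finset ContinuousLinearMap

noncomputable def diagCLM {d : ℕ} (g : Fin d → ℝ) :
    EuclideanSpace ℝ (Fin d) →L[ℝ] EuclideanSpace ℝ (Fin d) :=
  ((EuclideanSpace.equiv (Fin d) ℝ).symm.toContinuousLinearMap).comp
    ((ContinuousLinearMap.pi (fun i => g i • (ContinuousLinearMap.proj i))).comp
      (EuclideanSpace.equiv (Fin d) ℝ).toContinuousLinearMap)

lemma diagCLM_apply {d : ℕ} (g : Fin d → ℝ) (y : EuclideanSpace ℝ (Fin d)) :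
    diagCLM g y = (WithLp.equiv 2 (Fin d → ℝ)).symm fun i => g i * y i := by
  rfl

lemma diagCLM_apply_coord {d : ℕ} (g : Fin d → ℝ) (y : EuclideanSpace ℝ (Fin d)) (i : Fin d) :
    diagCLM g y i = g i * y i := rfl

variable {d N : ℕ} [NeZero N]

noncomputable abbrev projE (d N : ℕ) (n : Fin N) :
    (Fin N → EuclideanSpace ℝ (Fin d)) →L[ℝ] EuclideanSpace ℝ (Fin d) :=
  ContinuousLinearMap.proj (R := ℝ) (φ := fun _ : Fin N => EuclideanSpace ℝ (Fin d)) n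

local notation "E" => EuclideanSpace ℝ (Fin d)

noncomputable def Pmap (γ : Fin N → Fin d → ℝ) (n : Fin N) :
    (Fin N → EuclideanSpace ℝ (Fin d)) →L[ℝ] EuclideanSpace ℝ (Fin d) :=
  projE d N n - (diagCLM (γ n)).comp (projE d N 0)

lemma Pmap_apply (γ : Fin N → Fin d → ℝ) (n : Fin N) (Y : Fin N → EuclideanSpace ℝ (Fin d)) :
    Pmap γ n Y = Y n - diagCLM (γ n) (Y 0) := rfl

lemma psi_hasFDerivAt (γ : Fin N → Fin d → ℝ) (φ : EuclideanSpace ℝ (Fin d) → ℝ)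
    (hφ : ContDiff ℝ 2 φ) (β : ℝ) (Y : Fin N → EuclideanSpace ℝ (Fin d)) :
    HasFDerivAt (fun Z : Fin N → EuclideanSpace ℝ (Fin d) =>
        φ (Z 0) + β * ∑ n, ‖Pmap γ n Z‖ ^ 2)
      ((fderiv ℝ φ (Y 0)).comp (projE d N 0)
        + β • ∑ n, (2 • (innerSL ℝ (Pmap γ n Y)).comp (Pmap γ n))) Y := by
  have h1 : HasFDerivAt (fun Z : Fin N → EuclideanSpace ℝ (Fin d) => φ (Z 0))
      ((fderiv ℝ φ (Y 0)).comp (projE d N 0)) Y :=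
    (((hφ.differentiable (by norm_num)) (Y 0)).hasFDerivAt).comp Y
      (projE d N 0).hasFDerivAt
  have h2 : HasFDerivAt (fun Z : Fin N → EuclideanSpace ℝ (Fin d) => ∑ n, ‖Pmap γ n Z‖ ^ 2)
      (∑ n, (2 • (innerSL ℝ (Pmap γ n Y)).comp (Pmap γ n))) Y := by
    refine HasFDerivAt.fun_sum fun n _ => ?_
    exact (Pmap γ n).hasFDerivAt.norm_sq
  exact h1.add (h2.const_mul β)

lemma diagCLM_single (g : Fin d → ℝ) (i : Fin d) (a : ℝ) :
    diagCLM g (EuclideanSpace.single i a) = EuclideanSpace.single i (g i * a) := by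
  ext j
  simp only [diagCLM_apply_coord, EuclideanSpace.single_apply]
  by_cases h : j = i <;> simp [h]

lemma Pmap_single (γ : Fin N → Fin d → ℝ) (m n : Fin N) (e : EuclideanSpace ℝ (Fin d)) :
    Pmap γ m (Pi.single n e) =
      (if m = n then e else 0) - (if n = 0 then diagCLM (γ m) e else 0) := by
  rw [Pmap_apply, Pi.single_apply, Pi.single_apply]
  congr 1
  rw [apply_ite (diagCLM (γ m)), map_zero]
  simp only [@eq_comm _ (0 : Fin N) n]

lemma deriv_eval (γ : Fin N → Fin d → ℝ) (φ : EuclideanSpace ℝ (Fin d) → ℝ) (β : ℝ)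
    (Y : Fin N → EuclideanSpace ℝ (Fin d)) (n : Fin N) (i : Fin d) :
    ((fderiv ℝ φ (Y 0)).comp (projE d N 0)
      + β • ∑ m, (2 • (innerSL ℝ (Pmap γ m Y)).comp (Pmap γ m)))
      (Pi.single n (EuclideanSpace.single i 1))
    = (if n = 0 then fderiv ℝ φ (Y 0) (EuclideanSpace.single i 1) else 0)
      + β * 2 * (Pmap γ n Y) i
      - (if n = 0 then β * 2 * ∑ m, γ m i * (Pmap γ m Y) i else 0) := by
  have hproj : (projE d N 0) (Pi.single n (EuclideanSpace.single i 1))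
      = if n = 0 then EuclideanSpace.single i 1 else 0 := by
    rw [ContinuousLinearMap.proj_apply, Pi.single_apply]
    simp only [@eq_comm _ (0 : Fin N) n]
  have hinner : ∀ m : Fin N,
      (inner ℝ (Pmap γ m Y) (Pmap γ m (Pi.single n (EuclideanSpace.single i 1))) : ℝ)
      = (if m = n then (Pmap γ m Y) i else 0)
        - (if n = 0 then γ m i * (Pmap γ m Y) i else 0) := by
    intro m
    rw [Pmap_single, inner_sub_right]
    congr 1
    · by_cases h : m = n
      · simp only [h, if_true]
        rw [EuclideanSpace.inner_single_right]; simp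
      · simp [h]
    · by_cases h : n = 0
      · simp only [h, if_true, diagCLM_single, mul_one]
        rw [EuclideanSpace.inner_single_right]; simp [mul_comm]
      · simp [h]
  simp only [ContinuousLinearMap.add_apply, ContinuousLinearMap.coe_comp', Function.comp_apply,
    ContinuousLinearMap.smul_apply, ContinuousLinearMap.sum_apply, innerSL_apply_apply, hproj, hinner]
  rw [apply_ite (fderiv ℝ φ (Y 0)), map_zero]
  simp only [smul_eq_mul, nsmul_eq_mul, Nat.cast_ofNat, mul_sub, mul_ite, mul_zero,
    Finset.sum_sub_distrib, Finset.sum_ite_eq' Finset.univ n, Finset.mem_univ, if_true]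
  by_cases h : n = 0 <;> simp only [h, if_true, if_false, Finset.mul_sum, sub_zero] <;> ring_nf
  · simp

lemma key_sum (γ : Fin N → Fin d → ℝ) (hγ1 : ∀ i, γ 0 i = 1)
    (φ : EuclideanSpace ℝ (Fin d) → ℝ) (β : ℝ)
    (Y : Fin N → EuclideanSpace ℝ (Fin d)) (i : Fin d) :
    ∑ n, γ n i * (((fderiv ℝ φ (Y 0)).comp (projE d N 0)
      + β • ∑ m, (2 • (innerSL ℝ (Pmap γ m Y)).comp (Pmap γ m)))
      (Pi.single n (EuclideanSpace.single i 1)))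
    = fderiv ℝ φ (Y 0) (EuclideanSpace.single i 1) := by
  simp only [deriv_eval]
  simp only [mul_sub, mul_add, mul_ite, mul_zero, Finset.sum_sub_distrib, Finset.sum_add_distrib,
    Finset.sum_ite_eq' Finset.univ (0 : Fin N), Finset.mem_univ, if_true, hγ1, one_mul]
  have : ∑ n, γ n i * (β * 2 * (Pmap γ n Y) i) = β * 2 * ∑ m, γ m i * (Pmap γ m Y) i := by
    rw [Finset.mul_sum]; exact Finset.sum_congr rfl fun x _ => by ring
  rw [this]; ring

lemma gradient_coord (φ : EuclideanSpace ℝ (Fin d) → ℝ) (y : EuclideanSpace ℝ (Fin d))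
    (i : Fin d) : gradient φ y i = fderiv ℝ φ y (EuclideanSpace.single i 1) := by
  have h1 : (inner ℝ (EuclideanSpace.single i (1:ℝ)) (gradient φ y) : ℝ) = gradient φ y i := by
    rw [EuclideanSpace.inner_single_left]; simp
  rw [← h1, real_inner_comm]
  exact InnerProductSpace.toDual_symm_apply

lemma gradient_eq_symm (φ : EuclideanSpace ℝ (Fin d) → ℝ) (y : EuclideanSpace ℝ (Fin d)) :
    (WithLp.equiv 2 (Fin d → ℝ)).symm (fun i => fderiv ℝ φ y (EuclideanSpace.single i 1))
      = gradient φ y := by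
  ext i
  rw [gradient_coord]
  rfl

lemma tendsto_div_succ (C : ℝ) : Filter.Tendsto (fun m : ℕ => C / (m+1)) atTop (nhds 0) := by
  have := (tendsto_const_div_atTop_nhds_zero_nat C).comp (tendsto_add_atTop_nat 1)
  convert this using 2 with m
  simp [Function.comp]

set_option maxHeartbeats 2000000 in
theorem stmt_16' (d N : ℕ) [NeZero N]
    (γ : Fin N → Fin d → ℝ) (hγ1 : ∀ i, γ 0 i = 1)
    (H : (Fin N → EuclideanSpace ℝ (Fin d)) → EuclideanSpace ℝ (Fin d) → ℝ)
    (hHcont : Continuous fun Yq : (Fin N → EuclideanSpace ℝ (Fin d)) × EuclideanSpace ℝ (Fin d) =>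
      H Yq.1 Yq.2)
    (c : ℝ) (p : EuclideanSpace ℝ (Fin d))
    (w : (Fin N → EuclideanSpace ℝ (Fin d)) → ℝ) (K : NNReal)
    (hwLip : LipschitzWith K w)
    (hsub : ∀ ψ : (Fin N → EuclideanSpace ℝ (Fin d)) → ℝ, ContDiff ℝ 2 ψ →
      ∀ Y : Fin N → EuclideanSpace ℝ (Fin d), IsLocalMax (fun Z => w Z - ψ Z) Y →
        H Y (p + (WithLp.equiv 2 (Fin d → ℝ)).symm fun i =>
          ∑ n, γ n i * fderiv ℝ ψ Y (Pi.single n (EuclideanSpace.single i 1))) ≤ c)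
    (φ : EuclideanSpace ℝ (Fin d) → ℝ) (hφ : ContDiff ℝ 2 φ)
    (ybar : EuclideanSpace ℝ (Fin d))
    (hmax : ∃ U ∈ nhds ybar, ∀ y ∈ U, y ≠ ybar →
      w (fun n => (WithLp.equiv 2 (Fin d → ℝ)).symm fun i => γ n i * y i) - φ y <
        w (fun n => (WithLp.equiv 2 (Fin d → ℝ)).symm fun i => γ n i * ybar i) - φ ybar) :
    H (fun n => (WithLp.equiv 2 (Fin d → ℝ)).symm fun i => γ n i * ybar i)
      (p + gradient φ ybar) ≤ c := by
  classical
  obtain ⟨U, hU, hstrict⟩ := hmax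
  simp only [← diagCLM_apply] at hstrict ⊢
  set G : EuclideanSpace ℝ (Fin d) → (Fin N → EuclideanSpace ℝ (Fin d)) :=
    fun y n => diagCLM (γ n) y with hGdef
  have hG0 : ∀ y, G y 0 = y := by
    intro y; ext i; simp [hGdef, diagCLM_apply_coord, hγ1 i]
  have hGc : Continuous G := continuous_pi fun n => (diagCLM (γ n)).continuous
  obtain ⟨r, rpos, hball⟩ := Metric.nhds_basis_closedBall.mem_iff.mp hU
  have hlt : ∀ y ∈ closedBall ybar r, y ≠ ybar → w (G y) - φ y < w (G ybar) - φ ybar :=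
    fun y hy hne => hstrict y (hball hy) hne
  have hle : ∀ y ∈ closedBall ybar r, w (G y) - φ y ≤ w (G ybar) - φ ybar := by
    intro y hy
    rcases eq_or_ne y ybar with h | h
    · rw [h]
    · exact (hlt y hy h).le
  have hPG : ∀ (Y : Fin N → EuclideanSpace ℝ (Fin d)) n, Pmap γ n Y = Y n - G (Y 0) n :=
    fun Y n => rfl
  -- compact constraint set
  set Kset : Set (Fin N → EuclideanSpace ℝ (Fin d)) :=
    {Y | Y 0 ∈ closedBall ybar r ∧ ∀ n, ‖Pmap γ n Y‖ ≤ r} with hKdef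
  have hKclosed : IsClosed Kset := by
    have h1 : IsClosed {Y : Fin N → EuclideanSpace ℝ (Fin d) | Y 0 ∈ closedBall ybar r} :=
      IsClosed.preimage (continuous_apply 0) Metric.isClosed_closedBall
    have h2 : IsClosed {Y : Fin N → EuclideanSpace ℝ (Fin d) | ∀ n, ‖Pmap γ n Y‖ ≤ r} := by
      have : {Y : Fin N → EuclideanSpace ℝ (Fin d) | ∀ n, ‖Pmap γ n Y‖ ≤ r}
          = ⋂ n, {Y | ‖Pmap γ n Y‖ ≤ r} := by
        ext Y; simp [Set.mem_iInter]
      rw [this]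
      exact isClosed_iInter fun n => isClosed_le ((Pmap γ n).continuous.norm) continuous_const
    exact h1.inter h2
  have hKbdd : Kset ⊆ closedBall (G ybar) (r + (∑ n, ‖diagCLM (γ n)‖) * r) := by
    intro Y hY
    rw [mem_closedBall, dist_eq_norm]
    have hnn : (0:ℝ) ≤ r + (∑ n, ‖diagCLM (γ n)‖) * r :=
      add_nonneg rpos.le (mul_nonneg (Finset.sum_nonneg fun n _ => norm_nonneg _) rpos.le)
    rw [pi_norm_le_iff_of_nonneg hnn]
    intro n
    have h1 : ‖Y n - G (Y 0) n‖ ≤ r := by rw [← hPG]; exact hY.2 n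
    have h2 : ‖G (Y 0) n - G ybar n‖ ≤ ‖diagCLM (γ n)‖ * r := by
      have : G (Y 0) n - G ybar n = diagCLM (γ n) (Y 0 - ybar) := by
        simp [hGdef, map_sub]
      rw [this]
      refine le_trans ((diagCLM (γ n)).le_opNorm _) ?_
      have : ‖Y 0 - ybar‖ ≤ r := by
        rw [← dist_eq_norm]; exact mem_closedBall.mp hY.1
      exact mul_le_mul_of_nonneg_left this (norm_nonneg _)
    calc ‖(Y - G ybar) n‖ = ‖(Y n - G (Y 0) n) + (G (Y 0) n - G ybar n)‖ := by
          rw [Pi.sub_apply, sub_add_sub_cancel]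
      _ ≤ ‖Y n - G (Y 0) n‖ + ‖G (Y 0) n - G ybar n‖ := norm_add_le _ _
      _ ≤ r + ‖diagCLM (γ n)‖ * r := add_le_add h1 h2
      _ ≤ r + (∑ m, ‖diagCLM (γ m)‖) * r := by
          refine add_le_add_right (mul_le_mul_of_nonneg_right ?_ rpos.le) r
          exact Finset.single_le_sum (f := fun m => ‖diagCLM (γ m)‖)
            (fun m _ => norm_nonneg _) (Finset.mem_univ n)
  have hKc : IsCompact Kset :=
    (isCompact_closedBall _ _).of_isClosed_subset hKclosed hKbdd
  have hYbarK : G ybar ∈ Kset := by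
    constructor
    · rw [hG0]; exact mem_closedBall_self rpos.le
    · intro n
      rw [hPG, hG0]
      simp [rpos.le]
  -- maximizers of the penalized functional
  have hexists : ∀ m : ℕ, ∃ Y ∈ Kset, IsMaxOn
      (fun Z => w Z - (φ (Z 0) + ((m:ℝ)+1) * ∑ n, ‖Pmap γ n Z‖^2)) Kset Y := by
    intro m
    refine hKc.exists_isMaxOn ⟨G ybar, hYbarK⟩ (Continuous.continuousOn ?_)
    have hc1 : Continuous fun Z : Fin N → EuclideanSpace ℝ (Fin d) => φ (Z 0) :=
      hφ.continuous.comp (continuous_apply 0)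
    have hc2 : Continuous fun Z : Fin N → EuclideanSpace ℝ (Fin d) =>
        ∑ n, ‖Pmap γ n Z‖^2 :=
      continuous_finset_sum _ fun n _ => ((Pmap γ n).continuous.norm).pow 2
    exact hwLip.continuous.sub (hc1.add (continuous_const.mul hc2))
  choose YY hYK hYmax using hexists
  have Qdef : True := trivial
  have hQ0 : ∀ m, 0 ≤ (∑ n, ‖Pmap γ n (YY m)‖^2) := fun m => Finset.sum_nonneg fun n _ => sq_nonneg _
  have hPQ : ∀ m n, ‖Pmap γ n (YY m)‖ ≤ Real.sqrt ((∑ n, ‖Pmap γ n (YY m)‖^2)) := by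
    intro m n
    refine Real.le_sqrt_of_sq_le ?_
    exact Finset.single_le_sum (f := fun n => ‖Pmap γ n (YY m)‖^2)
      (fun n _ => sq_nonneg _) (Finset.mem_univ n)
  have hqball : ∀ m : ℕ, YY m 0 ∈ closedBall ybar r := fun m => (hYK m).1
  -- key value inequalities
  have hMle : ∀ m : ℕ, w (G ybar) - φ ybar ≤ w (YY m) - φ (YY m 0) - ((m:ℝ)+1) * (∑ n, ‖Pmap γ n (YY m)‖^2) := by
    intro m
    have h0 := hYmax m hYbarK
    have hP0 : ∀ n, Pmap γ n (G ybar) = 0 := by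
      intro n; rw [hPG, hG0, sub_self]
    simp only [Set.mem_setOf_eq, hP0, norm_zero, hG0] at h0
    have hz : ∑ n : Fin N, ((0:ℝ))^2 = 0 := by simp
    rw [hz] at h0
    linarith
  have hw1 : ∀ m : ℕ, w (YY m) ≤ w (G (YY m 0)) + K * Real.sqrt ((∑ n, ‖Pmap γ n (YY m)‖^2)) := by
    intro m
    have hd := hwLip.dist_le_mul (YY m) (G (YY m 0))
    rw [dist_eq_norm, dist_eq_norm] at hd
    have hnorm : ‖YY m - G (YY m 0)‖ ≤ Real.sqrt ((∑ n, ‖Pmap γ n (YY m)‖^2)) := by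
      rw [pi_norm_le_iff_of_nonneg (Real.sqrt_nonneg _)]
      intro n
      rw [Pi.sub_apply, ← hPG]
      exact hPQ m n
    rw [Real.norm_eq_abs] at hd
    have habs := (le_abs_self (w (YY m) - w (G (YY m 0)))).trans hd
    have hmul : (K:ℝ) * ‖YY m - G (YY m 0)‖ ≤ K * Real.sqrt (∑ n, ‖Pmap γ n (YY m)‖^2) :=
      mul_le_mul_of_nonneg_left hnorm K.coe_nonneg
    linarith
  have hδ : ∀ m : ℕ, Real.sqrt ((∑ n, ‖Pmap γ n (YY m)‖^2)) ≤ K / ((m:ℝ)+1) := by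
    intro m
    have hm1 : (0:ℝ) < (m:ℝ)+1 := by positivity
    have hkey : ((m:ℝ)+1) * (∑ n, ‖Pmap γ n (YY m)‖^2) ≤ K * Real.sqrt ((∑ n, ‖Pmap γ n (YY m)‖^2)) := by
      have h1 := hMle m
      have h2 := hw1 m
      have h3 := hle (YY m 0) (hqball m)
      linarith
    have hQsq : Real.sqrt (∑ n, ‖Pmap γ n (YY m)‖^2) ^ 2 = ∑ n, ‖Pmap γ n (YY m)‖^2 :=
      Real.sq_sqrt (hQ0 m)
    rcases eq_or_lt_of_le (Real.sqrt_nonneg (∑ n, ‖Pmap γ n (YY m)‖^2)) with h | h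
    · rw [← h]; positivity
    · rw [le_div_iff₀ hm1]
      nlinarith [hkey, hQsq, h]
  have hvlow : ∀ m : ℕ, w (G ybar) - φ ybar - (K:ℝ)*K / ((m:ℝ)+1) ≤ w (G (YY m 0)) - φ (YY m 0) := by
    intro m
    have hm1 : (0:ℝ) < (m:ℝ)+1 := by positivity
    have h1 := hMle m
    have h2 := hw1 m
    have h3 : ((m:ℝ)+1) * (∑ n, ‖Pmap γ n (YY m)‖^2) ≥ 0 := mul_nonneg hm1.le (hQ0 m)
    have h4 : (K:ℝ) * Real.sqrt ((∑ n, ‖Pmap γ n (YY m)‖^2)) ≤ (K:ℝ) * (K / ((m:ℝ)+1)) :=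
      mul_le_mul_of_nonneg_left (hδ m) K.coe_nonneg
    have h5 : (K:ℝ) * (K / ((m:ℝ)+1)) = (K:ℝ)*K / ((m:ℝ)+1) := by ring
    linarith
  -- convergence of the maximizers
  have hqtend : Tendsto (fun m => YY m 0) atTop (nhds ybar) := by
    rw [Metric.tendsto_atTop]
    intro ε εpos
    have hε' : 0 < min ε r := lt_min εpos rpos
    rcases (closedBall ybar r \ ball ybar (min ε r)).eq_empty_or_nonempty with hA | hA
    · refine ⟨0, fun m _ => ?_⟩
      have hsub : closedBall ybar r ⊆ ball ybar (min ε r) := by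
        intro x hx
        by_contra hx'
        exact Set.eq_empty_iff_forall_notMem.mp hA x ⟨hx, hx'⟩
      exact lt_of_lt_of_le (mem_ball.mp (hsub (hqball m))) (min_le_left _ _)
    · have hAc : IsCompact (closedBall ybar r \ ball ybar (min ε r)) :=
        (isCompact_closedBall _ _).diff isOpen_ball
      obtain ⟨z, hzA, hzmax⟩ := hAc.exists_isMaxOn hA
        ((hwLip.continuous.comp hGc).sub hφ.continuous).continuousOn
      have hzne : z ≠ ybar := by
        intro h
        exact hzA.2 (h ▸ mem_ball_self hε')
      have hM' : w (G z) - φ z < w (G ybar) - φ ybar := hlt z hzA.1 hzne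
      obtain ⟨m₀, hm₀⟩ := exists_nat_gt
        ((K:ℝ)*K / (w (G ybar) - φ ybar - (w (G z) - φ z)))
      refine ⟨m₀, fun m hm => ?_⟩
      have hD : 0 < w (G ybar) - φ ybar - (w (G z) - φ z) := by linarith
      have key : (K:ℝ)*K / ((m:ℝ)+1) < w (G ybar) - φ ybar - (w (G z) - φ z) := by
        have h1 : (K:ℝ)*K / (w (G ybar) - φ ybar - (w (G z) - φ z)) < (m:ℝ)+1 := by
          have : (m₀:ℝ) ≤ m := Nat.cast_le.mpr hm
          linarith
        rw [div_lt_iff₀ hD] at h1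
        rw [div_lt_iff₀ (by positivity : (0:ℝ) < (m:ℝ)+1)]
        nlinarith
      by_contra hcon
      push_neg at hcon
      have hmemA : YY m 0 ∈ closedBall ybar r \ ball ybar (min ε r) := by
        refine ⟨hqball m, fun hin => ?_⟩
        exact absurd (lt_of_lt_of_le (mem_ball.mp hin) (min_le_left _ _)) (not_lt.mpr hcon)
      have h5 : w (G (YY m 0)) - φ (YY m 0) ≤ w (G z) - φ z := hzmax hmemA
      have h6 := hvlow m
      linarith
  have hYtend : Tendsto YY atTop (nhds (G ybar)) := by
    rw [tendsto_pi_nhds]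
    intro n
    have h1 : Tendsto (fun m => Pmap γ n (YY m)) atTop (nhds 0) := by
      refine squeeze_zero_norm (fun m => (hPQ m n).trans (hδ m)) (tendsto_div_succ K)
    have h2 : Tendsto (fun m => diagCLM (γ n) (YY m 0)) atTop (nhds (diagCLM (γ n) ybar)) :=
      ((diagCLM (γ n)).continuous.tendsto _).comp hqtend
    have h3 := h1.add h2
    rw [zero_add] at h3
    have heq : (fun m => Pmap γ n (YY m) + diagCLM (γ n) (YY m 0)) = fun m => YY m n := by
      funext m
      rw [Pmap_apply, sub_add_cancel]
    rw [heq] at h3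
    exact h3
  -- eventually, the subsolution inequality at the maximizer
  have hHineq : ∀ᶠ m in atTop, H (YY m) (p + gradient φ (YY m 0)) ≤ c := by
    have hev1 : ∀ᶠ m : ℕ in atTop, YY m 0 ∈ ball ybar r :=
      hqtend (ball_mem_nhds _ rpos)
    have hev2 : ∀ᶠ m : ℕ in atTop, (K:ℝ)/((m:ℝ)+1) < r :=
      (tendsto_div_succ K).eventually_lt_const rpos
    filter_upwards [hev1, hev2] with m h1 h2
    have hψc : ContDiff ℝ 2 (fun Z : Fin N → EuclideanSpace ℝ (Fin d) =>
        φ (Z 0) + ((m:ℝ)+1) * ∑ n, ‖Pmap γ n Z‖^2) := by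
      refine ContDiff.add ?_ (contDiff_const.mul ?_)
      · exact hφ.comp (projE d N 0).contDiff
      · exact ContDiff.sum fun n _ => ContDiff.norm_sq (𝕜 := ℝ) (Pmap γ n).contDiff
    have hVopen : IsOpen {Y : Fin N → EuclideanSpace ℝ (Fin d) |
        Y 0 ∈ ball ybar r ∧ ∀ n, ‖Pmap γ n Y‖ < r} := by
      have heq : {Y : Fin N → EuclideanSpace ℝ (Fin d) |
          Y 0 ∈ ball ybar r ∧ ∀ n, ‖Pmap γ n Y‖ < r}
          = {Y : Fin N → EuclideanSpace ℝ (Fin d) | Y 0 ∈ ball ybar r}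
            ∩ ⋂ n, {Y | ‖Pmap γ n Y‖ < r} := by
        ext Y; simp [Set.mem_iInter]
      rw [heq]
      refine IsOpen.inter (IsOpen.preimage (continuous_apply 0) isOpen_ball) ?_
      exact isOpen_iInter_of_finite fun n =>
        isOpen_lt ((Pmap γ n).continuous.norm) continuous_const
    have hmemV : YY m ∈ {Y : Fin N → EuclideanSpace ℝ (Fin d) |
        Y 0 ∈ ball ybar r ∧ ∀ n, ‖Pmap γ n Y‖ < r} :=
      ⟨h1, fun n => lt_of_le_of_lt ((hPQ m n).trans (hδ m)) h2⟩
    have hVK : {Y : Fin N → EuclideanSpace ℝ (Fin d) |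
        Y 0 ∈ ball ybar r ∧ ∀ n, ‖Pmap γ n Y‖ < r} ⊆ Kset :=
      fun Y hY => ⟨ball_subset_closedBall hY.1, fun n => (hY.2 n).le⟩
    have hKnhds : Kset ∈ nhds (YY m) := mem_nhds_iff.mpr ⟨_, hVK, hVopen, hmemV⟩
    have hloc : IsLocalMax (fun Z => w Z -
        (φ (Z 0) + ((m:ℝ)+1) * ∑ n, ‖Pmap γ n Z‖^2)) (YY m) :=
      (hYmax m).isLocalMax hKnhds
    have happ := hsub _ hψc (YY m) hloc
    have hfd := (psi_hasFDerivAt γ φ hφ ((m:ℝ)+1) (YY m)).fderiv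
    rw [hfd] at happ
    have harg : ((WithLp.equiv 2 (Fin d → ℝ)).symm fun i =>
        ∑ n, γ n i * (((fderiv ℝ φ (YY m 0)).comp (projE d N 0)
          + ((m:ℝ)+1) • ∑ k, (2 • (innerSL ℝ (Pmap γ k (YY m))).comp (Pmap γ k)))
          (Pi.single n (EuclideanSpace.single i 1))))
        = gradient φ (YY m 0) := by
      have h := funext (key_sum γ hγ1 φ ((m:ℝ)+1) (YY m))
      rw [h]
      exact gradient_eq_symm φ (YY m 0)
    rw [harg] at happ
    exact happ
  -- pass to the limit
  have hgradc : Continuous fun y => gradient φ y :=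
    (LinearIsometryEquiv.continuous _).comp (hφ.continuous_fderiv (by norm_num))
  have htend2 : Tendsto (fun m => H (YY m) (p + gradient φ (YY m 0))) atTop
      (nhds (H (G ybar) (p + gradient φ ybar))) := by
    have hpair : Tendsto (fun m => (YY m, p + gradient φ (YY m 0))) atTop
        (nhds (G ybar, p + gradient φ ybar)) :=
      hYtend.prodMk_nhds (tendsto_const_nhds.add ((hgradc.tendsto ybar).comp hqtend))
    exact (hHcont.tendsto _).comp hpair
  exact le_of_tendsto htend2 hHineq


/-- Theorem 3.1: if `w` is a Lipschitz, `ℤ^{d×N}`-periodic viscosity subsolution of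
`H(Y, p + Σₙ Γⁿ ∇_{yⁿ} w) ≤ c` on `ℝ^{d×N}` (with `Γ¹ = I` and the `Γⁿ` diagonal),
then at any strict local maximum `ȳ` of `v − φ`, where
`v(y) = w(Γ¹y, ..., Γᴺy)` and `φ ∈ C²`, one has
`H(Γ¹ȳ,...,Γᴺȳ, p + ∇φ(ȳ)) ≤ c`. -/
theorem stmt_16 (d N : ℕ) [NeZero N]
    (γ : Fin N → Fin d → ℝ) (hγ1 : ∀ i, γ 0 i = 1)
    (H : (Fin N → EuclideanSpace ℝ (Fin d)) → EuclideanSpace ℝ (Fin d) → ℝ)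
    (hHcont : Continuous fun Yq : (Fin N → EuclideanSpace ℝ (Fin d)) × EuclideanSpace ℝ (Fin d) =>
      H Yq.1 Yq.2)
    (c : ℝ) (p : EuclideanSpace ℝ (Fin d))
    (w : (Fin N → EuclideanSpace ℝ (Fin d)) → ℝ) (K : NNReal)
    (hwLip : LipschitzWith K w)
    (hwper : ∀ (Y : Fin N → EuclideanSpace ℝ (Fin d)) (k : Fin N → Fin d → ℤ),
      w (fun n => Y n + (WithLp.equiv 2 (Fin d → ℝ)).symm fun i => (k n i : ℝ)) = w Y)
    (hsub : ∀ ψ : (Fin N → EuclideanSpace ℝ (Fin d)) → ℝ, ContDiff ℝ 2 ψ →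
      ∀ Y : Fin N → EuclideanSpace ℝ (Fin d), IsLocalMax (fun Z => w Z - ψ Z) Y →
        H Y (p + (WithLp.equiv 2 (Fin d → ℝ)).symm fun i =>
          ∑ n, γ n i * fderiv ℝ ψ Y (Pi.single n (EuclideanSpace.single i 1))) ≤ c)
    (φ : EuclideanSpace ℝ (Fin d) → ℝ) (hφ : ContDiff ℝ 2 φ)
    (ybar : EuclideanSpace ℝ (Fin d))
    (hmax : ∃ U ∈ nhds ybar, ∀ y ∈ U, y ≠ ybar →
      w (fun n => (WithLp.equiv 2 (Fin d → ℝ)).symm fun i => γ n i * y i) - φ y <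
        w (fun n => (WithLp.equiv 2 (Fin d → ℝ)).symm fun i => γ n i * ybar i) - φ ybar) :
    H (fun n => (WithLp.equiv 2 (Fin d → ℝ)).symm fun i => γ n i * ybar i)
      (p + gradient φ ybar) ≤ c := by
  exact stmt_16' d N γ hγ1 H hHcont c p w K hwLip hsub φ hφ ybar hmax
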